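/- Let x ∈ [l,u] and ε ≥ 0. Define the criticality measure χ(x) = max{ −∇f(x)·d : x + d ∈ [l,u], ‖d‖ ≤ 1 }. Then χ(x) ≤ ‖proj_{T(x,ε)}(−∇f(x))‖ + ε √n ‖proj_{N(x,ε)}(−∇f(x))‖. -/

import Mathlib

open scoped RealInnerProductSpace

/-- The box `[l, u]` in `ℝⁿ`. -/
def Box {n : ℕ} (l u : EuclideanSpace ℝ (Fin n)) : Set (EuclideanSpace ℝ (Fin n)) :=
  {y | ∀ j, l j ≤ y j ∧ y j ≤ u j}

/-- The ε-normal cone `N(x, ε)`. -/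
def NCone {n : ℕ} (l u x : EuclideanSpace ℝ (Fin n)) (ε : ℝ) :
    Set (EuclideanSpace ℝ (Fin n)) :=
  {v | ∃ a b : Fin n → ℝ, (∀ j, 0 ≤ a j) ∧ (∀ j, 0 ≤ b j) ∧
    (∀ j, ¬ (x j ≤ l j + ε) → a j = 0) ∧ (∀ j, ¬ (u j - ε ≤ x j) → b j = 0) ∧
    v = ∑ j, (b j - a j) • EuclideanSpace.single j (1:ℝ)}

/-- The ε-tangent cone `T(x, ε)` as the polar of `N(x, ε)`. -/
def TCone {n : ℕ} (l u x : EuclideanSpace ℝ (Fin n)) (ε : ℝ) :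
    Set (EuclideanSpace ℝ (Fin n)) :=
  {d | ∀ v ∈ NCone l u x ε, ⟪d, v⟫ ≤ 0}

private lemma sum_single_apply {n : ℕ} (c : Fin n → ℝ) (k : Fin n) :
    (∑ j, c j • EuclideanSpace.single j (1:ℝ)) k = c k := by
  have : (∑ j, c j • EuclideanSpace.single j (1:ℝ)) k
      = ∑ j, (c j • EuclideanSpace.single j (1:ℝ)) k :=
    by rw [WithLp.ofLp_sum]; exact Finset.sum_apply k Finset.univ _
  rw [this]
  simp [EuclideanSpace.single_apply]

private lemma NCone_smul {n : ℕ} {l u x : EuclideanSpace ℝ (Fin n)} {ε t : ℝ}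
    (ht : 0 ≤ t) {v : EuclideanSpace ℝ (Fin n)} (hv : v ∈ NCone l u x ε) :
    t • v ∈ NCone l u x ε := by
  obtain ⟨a, b, ha, hb, hal, hbu, hveq⟩ := hv
  refine ⟨fun j => t * a j, fun j => t * b j, fun j => mul_nonneg ht (ha j),
    fun j => mul_nonneg ht (hb j), fun j hj => by show t * a j = 0; rw [hal j hj, mul_zero],
    fun j hj => by show t * b j = 0; rw [hbu j hj, mul_zero], ?_⟩
  rw [hveq, Finset.smul_sum]
  refine Finset.sum_congr rfl fun j _ => ?_
  rw [smul_smul]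
  congr 1
  ring

private lemma NCone_add {n : ℕ} {l u x : EuclideanSpace ℝ (Fin n)} {ε : ℝ}
    {v w : EuclideanSpace ℝ (Fin n)} (hv : v ∈ NCone l u x ε) (hw : w ∈ NCone l u x ε) :
    v + w ∈ NCone l u x ε := by
  obtain ⟨a, b, ha, hb, hal, hbu, hveq⟩ := hv
  obtain ⟨a', b', ha', hb', hal', hbu', hweq⟩ := hw
  refine ⟨fun j => a j + a' j, fun j => b j + b' j,
    fun j => add_nonneg (ha j) (ha' j), fun j => add_nonneg (hb j) (hb' j),
    fun j hj => by show a j + a' j = 0; rw [hal j hj, hal' j hj, add_zero],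
    fun j hj => by show b j + b' j = 0; rw [hbu j hj, hbu' j hj, add_zero], ?_⟩
  rw [hveq, hweq, ← Finset.sum_add_distrib]
  refine Finset.sum_congr rfl fun j _ => ?_
  rw [← add_smul]
  congr 1
  ring

private lemma small_le_zero {c C : ℝ} (h : ∀ t : ℝ, 0 < t → t ≤ 1 → c ≤ t * C) :
    c ≤ 0 := by
  by_contra hc
  push_neg at hc
  rcases le_or_gt C 0 with hC | hC
  · have := h 1 one_pos le_rfl
    nlinarith
  · have ht := h (min 1 (c / (2 * C))) (lt_min one_pos (by positivity)) (min_le_left _ _)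
    have h2 : min 1 (c / (2 * C)) ≤ c / (2 * C) := min_le_right _ _
    have h3 : min 1 (c / (2 * C)) * C ≤ c / (2 * C) * C :=
      mul_le_mul_of_nonneg_right h2 hC.le
    have h4 : c / (2 * C) * C = c / 2 := by field_simp
    linarith

theorem stmt5 {n : ℕ} (f : EuclideanSpace ℝ (Fin n) → ℝ)
    (l u x gx : EuclideanSpace ℝ (Fin n)) (ε : ℝ) (hε : 0 ≤ ε)
    (hlu : ∀ j, l j < u j) (hx : x ∈ Box l u)
    (hgrad : HasGradientAt f gx x)
    (pT pN : EuclideanSpace ℝ (Fin n))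
    (hpT : pT ∈ TCone l u x ε) (hprojT : ∀ y ∈ TCone l u x ε, ‖-gx - pT‖ ≤ ‖-gx - y‖)
    (hpN : pN ∈ NCone l u x ε) (hprojN : ∀ y ∈ NCone l u x ε, ‖-gx - pN‖ ≤ ‖-gx - y‖) :
    sSup {r : ℝ | ∃ d : EuclideanSpace ℝ (Fin n), x + d ∈ Box l u ∧ ‖d‖ ≤ 1 ∧
        r = ⟪-gx, d⟫} ≤ ‖pT‖ + ε * Real.sqrt n * ‖pN‖ := by
  classical
  -- variational inequality for the projection onto NCone
  have key : ∀ w ∈ NCone l u x ε, ∀ t : ℝ, 0 < t → t ≤ 1 →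
      ⟪-gx - pN, w⟫ ≤ t * (‖w‖ ^ 2 / 2) := by
    intro w hw t ht ht1
    have hmem : pN + t • w ∈ NCone l u x ε := NCone_add hpN (NCone_smul ht.le hw)
    have hle := hprojN _ hmem
    have heq : -gx - (pN + t • w) = (-gx - pN) - t • w := by abel
    rw [heq] at hle
    have hsq : ‖-gx - pN‖ ^ 2 ≤ ‖(-gx - pN) - t • w‖ ^ 2 := by
      exact pow_le_pow_left₀ (norm_nonneg _) hle 2
    have hexp : ‖(-gx - pN) - t • w‖ ^ 2
        = ‖-gx - pN‖ ^ 2 - 2 * (t * ⟪-gx - pN, w⟫) + t ^ 2 * ‖w‖ ^ 2 := by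
      rw [norm_sub_sq_real, real_inner_smul_right, norm_smul]
      rw [mul_pow, Real.norm_eq_abs, sq_abs]
    rw [hexp] at hsq
    nlinarith
  have hNineq : ∀ w ∈ NCone l u x ε, ⟪-gx - pN, w⟫ ≤ 0 := by
    intro w hw
    exact small_le_zero (C := ‖w‖ ^ 2 / 2) fun t ht ht1 => key w hw t ht ht1
  have hNeq : ⟪-gx - pN, pN⟫ = 0 := by
    refine le_antisymm (hNineq pN hpN) ?_
    -- test with (1 - t) • pN
    have key2 : ∀ t : ℝ, 0 < t → t ≤ 1 → -⟪-gx - pN, pN⟫ ≤ t * (‖pN‖ ^ 2 / 2) := by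
      intro t ht ht1
      have hmem : (1 - t) • pN ∈ NCone l u x ε := NCone_smul (by linarith) hpN
      have hle := hprojN _ hmem
      have heq : -gx - (1 - t) • pN = (-gx - pN) + t • pN := by
        rw [sub_smul, one_smul]; abel
      rw [heq] at hle
      have hsq : ‖-gx - pN‖ ^ 2 ≤ ‖(-gx - pN) + t • pN‖ ^ 2 :=
        pow_le_pow_left₀ (norm_nonneg _) hle 2
      have hexp : ‖(-gx - pN) + t • pN‖ ^ 2
          = ‖-gx - pN‖ ^ 2 + 2 * (t * ⟪-gx - pN, pN⟫) + t ^ 2 * ‖pN‖ ^ 2 := by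
        rw [norm_add_sq_real, real_inner_smul_right, norm_smul]
        rw [mul_pow, Real.norm_eq_abs, sq_abs]
      rw [hexp] at hsq
      nlinarith
    have := small_le_zero (C := ‖pN‖ ^ 2 / 2) fun t ht ht1 => key2 t ht ht1
    linarith
  -- Moreau: pT = -gx - pN
  have hqT : (-gx - pN) ∈ TCone l u x ε := hNineq
  have hdecomp : pT = -gx - pN := by
    have h1 : ‖-gx - pT‖ ≤ ‖pN‖ := by
      have := hprojT _ hqT
      have heq : -gx - (-gx - pN) = pN := by abel
      rwa [heq] at this
    have h2 : ⟪pT, pN⟫ ≤ 0 := hpT pN hpN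
    have heq3 : -gx - pT = pN + ((-gx - pN) - pT) := by abel
    have h4 : ‖-gx - pT‖ ^ 2
        = ‖pN‖ ^ 2 + 2 * ⟪pN, (-gx - pN) - pT⟫ + ‖(-gx - pN) - pT‖ ^ 2 := by
      rw [heq3, norm_add_sq_real]
    have hc1 : (⟪pN, -gx - pN⟫ : ℝ) = 0 := by
      rw [real_inner_comm]; exact hNeq
    have h5 : ⟪pN, (-gx - pN) - pT⟫ = - ⟪pT, pN⟫ := by
      rw [inner_sub_right, hc1, real_inner_comm pN pT]
      ring
    have h6 : ‖-gx - pT‖ ^ 2 ≤ ‖pN‖ ^ 2 :=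
      pow_le_pow_left₀ (norm_nonneg _) h1 2
    have h7 : ‖(-gx - pN) - pT‖ ^ 2 ≤ 0 := by
      rw [h4, h5] at h6
      nlinarith
    have h8 : ‖(-gx - pN) - pT‖ = 0 := by
      nlinarith [norm_nonneg ((-gx - pN) - pT)]
    have h9 : (-gx - pN) - pT = 0 := norm_eq_zero.mp h8
    exact (sub_eq_zero.mp h9).symm
  -- coordinate description of pN
  obtain ⟨a, b, ha, hb, hal, hbu, hpNeq⟩ := hpN
  have hcoord : ∀ j, pN j = b j - a j := by
    intro j
    rw [hpNeq]
    exact sum_single_apply _ j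
  -- l1-l2 inequality
  have hnorm : ‖pN‖ = Real.sqrt (∑ j, (pN j) ^ 2) := by
    rw [EuclideanSpace.norm_eq]
    congr 1
    refine Finset.sum_congr rfl fun j _ => ?_
    rw [Real.norm_eq_abs, sq_abs]
  have l1l2 : ∑ j, |pN j| ≤ Real.sqrt n * ‖pN‖ := by
    have h1 : (∑ j, |pN j|) ^ 2 ≤ (n : ℝ) * ∑ j, (pN j) ^ 2 := by
      have := sq_sum_le_card_mul_sum_sq (s := Finset.univ) (f := fun j => |pN j|)
      simpa [sq_abs] using this
    calc ∑ j, |pN j| = Real.sqrt ((∑ j, |pN j|) ^ 2) :=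
          (Real.sqrt_sq (by positivity)).symm
      _ ≤ Real.sqrt ((n : ℝ) * ∑ j, (pN j) ^ 2) := Real.sqrt_le_sqrt h1
      _ = Real.sqrt n * Real.sqrt (∑ j, (pN j) ^ 2) :=
          Real.sqrt_mul (by positivity) _
      _ = Real.sqrt n * ‖pN‖ := by rw [hnorm]
  -- main bound
  refine Real.sSup_le ?_ (by positivity)
  rintro r ⟨d, hdbox, hdnorm, rfl⟩
  have hsplit : (⟪-gx, d⟫ : ℝ) = ⟪pT, d⟫ + ⟪pN, d⟫ := by
    have : (-gx : EuclideanSpace ℝ (Fin n)) = pT + pN := by rw [hdecomp]; abel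
    rw [this, inner_add_left]
  have hT : (⟪pT, d⟫ : ℝ) ≤ ‖pT‖ := by
    calc (⟪pT, d⟫ : ℝ) ≤ ‖pT‖ * ‖d‖ := real_inner_le_norm _ _
      _ ≤ ‖pT‖ * 1 := mul_le_mul_of_nonneg_left hdnorm (norm_nonneg _)
      _ = ‖pT‖ := mul_one _
  have hNinner : (⟪pN, d⟫ : ℝ) = ∑ j, pN j * d j := by
    simp [PiLp.inner_apply, RCLike.inner_apply]
    exact Finset.sum_congr rfl fun j _ => mul_comm _ _
  have hNbound : (⟪pN, d⟫ : ℝ) ≤ ε * ∑ j, |pN j| := by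
    rw [hNinner, Finset.mul_sum]
    refine Finset.sum_le_sum fun j _ => ?_
    rcases lt_trichotomy (pN j) 0 with h | h | h
    · have haj : 0 < a j := by
        have := hcoord j
        have := hb j
        nlinarith [hcoord j, hb j]
      have hxl : x j ≤ l j + ε := by
        by_contra hc
        exact absurd (hal j hc) (ne_of_gt haj)
      have hd : -ε ≤ d j := by
        have := (hdbox j).1
        have hxd : l j ≤ x j + d j := this
        linarith
      rw [abs_of_neg h]
      nlinarith
    · simp [h]
    · have hbj : 0 < b j := by
        nlinarith [hcoord j, ha j]
      have hxu : u j - ε ≤ x j := by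
        by_contra hc
        exact absurd (hbu j hc) (ne_of_gt hbj)
      have hd : d j ≤ ε := by
        have hxd : x j + d j ≤ u j := (hdbox j).2
        linarith
      rw [abs_of_pos h]
      nlinarith
  calc (⟪-gx, d⟫ : ℝ) = ⟪pT, d⟫ + ⟪pN, d⟫ := hsplit
    _ ≤ ‖pT‖ + ε * ∑ j, |pN j| := add_le_add hT hNbound
    _ ≤ ‖pT‖ + ε * (Real.sqrt n * ‖pN‖) := by
        have := mul_le_mul_of_nonneg_left l1l2 hε
        linarith
    _ = ‖pT‖ + ε * Real.sqrt n * ‖pN‖ := by ring
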